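/- (Catalan's identity for bicomplex Pell–Lucas numbers) For every integer n and every integer r, BPL(n)² − BPL(n+r)·BPL(n−r) = 96·(−1)^{n−r+1}·P(r)²·(j + ij). -/

import Mathlib

open scoped TensorProduct

noncomputable def bi : ℂ ⊗[ℝ] ℂ := Complex.I ⊗ₜ[ℝ] 1
noncomputable def bj : ℂ ⊗[ℝ] ℂ := (1 : ℂ) ⊗ₜ[ℝ] Complex.I
noncomputable def bij : ℂ ⊗[ℝ] ℂ := Complex.I ⊗ₜ[ℝ] Complex.I

/-- The bicomplex Pell-Lucas number `BPL n = Q n + Q (n+1) i + Q (n+2) j + Q (n+3) ij`. -/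
noncomputable def BPL (Q : ℤ → ℤ) (n : ℤ) : ℂ ⊗[ℝ] ℂ :=
  (Q n : ℝ) • (1 : ℂ ⊗[ℝ] ℂ) + (Q (n + 1) : ℝ) • bi + (Q (n + 2) : ℝ) • bj +
    (Q (n + 3) : ℝ) • bij

lemma hbi2 : bi * bi = -1 := by
  simp [bi, Algebra.TensorProduct.tmul_mul_tmul, Complex.I_mul_I,
    TensorProduct.neg_tmul, TensorProduct.tmul_neg, Algebra.TensorProduct.one_def]

lemma hbj2 : bj * bj = -1 := by
  simp [bj, Algebra.TensorProduct.tmul_mul_tmul, Complex.I_mul_I,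
    TensorProduct.neg_tmul, TensorProduct.tmul_neg, Algebra.TensorProduct.one_def]

lemma hbibj : bi * bj = bij := by
  simp [bi, bj, bij, Algebra.TensorProduct.tmul_mul_tmul]

lemma hbij2 : bij * bij = 1 := by
  simp [bij, Algebra.TensorProduct.tmul_mul_tmul, Complex.I_mul_I,
    TensorProduct.neg_tmul, TensorProduct.tmul_neg, Algebra.TensorProduct.one_def]

lemma hbibij : bi * bij = -bj := by
  simp [bi, bj, bij, Algebra.TensorProduct.tmul_mul_tmul, Complex.I_mul_I,
    TensorProduct.neg_tmul, TensorProduct.tmul_neg]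

lemma hbjbij : bj * bij = -bi := by
  simp [bi, bj, bij, Algebra.TensorProduct.tmul_mul_tmul, Complex.I_mul_I,
    TensorProduct.neg_tmul, TensorProduct.tmul_neg]

lemma mul_expand (x0 x1 x2 x3 y0 y1 y2 y3 : ℝ) :
    (x0 • (1 : ℂ ⊗[ℝ] ℂ) + x1 • bi + x2 • bj + x3 • bij) *
      (y0 • (1 : ℂ ⊗[ℝ] ℂ) + y1 • bi + y2 • bj + y3 • bij) =
    (x0*y0 - x1*y1 - x2*y2 + x3*y3) • (1 : ℂ ⊗[ℝ] ℂ) +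
      (x0*y1 + x1*y0 - x2*y3 - x3*y2) • bi +
      (x0*y2 + x2*y0 - x1*y3 - x3*y1) • bj +
      (x0*y3 + x1*y2 + x2*y1 + x3*y0) • bij := by
  have hbjbi : bj * bi = bij := (mul_comm bj bi).trans hbibj
  have hbijbi : bij * bi = -bj := (mul_comm bij bi).trans hbibij
  have hbijbj : bij * bj = -bi := (mul_comm bij bj).trans hbjbij
  simp only [add_mul, mul_add, smul_mul_smul_comm, mul_one, one_mul,
    hbi2, hbj2, hbibj, hbij2, hbibij, hbjbij, hbjbi, hbijbi, hbijbj, smul_neg]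
  module

theorem bicomplexPellLucas_catalan (P Q : ℤ → ℤ)
    (hP : ∀ n : ℤ, P (n + 2) = 2 * P (n + 1) + P n) (hP0 : P 0 = 0) (hP1 : P 1 = 1)
    (hQ : ∀ n : ℤ, Q (n + 2) = 2 * Q (n + 1) + Q n) (hQ0 : Q 0 = 2) (hQ1 : Q 1 = 2)
    (n r : ℤ) :
    BPL Q n ^ 2 - BPL Q (n + r) * BPL Q (n - r) =
      (96 * (-1 : ℝ) ^ (n - r + 1) * (P r : ℝ) ^ 2) • (bj + bij) := by
  obtain ⟨m, rfl⟩ : ∃ m, n = m + r := ⟨n - r, by ring⟩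
  rw [pow_two]
  simp only [BPL, add_sub_cancel_right]
  rw [mul_expand, mul_expand]
  set e : ℝ := Real.sqrt 2 with he_def
  have he : e ^ 2 = 2 := Real.sq_sqrt (by norm_num)
  have h1e : (1 : ℝ) + e ≠ 0 := by positivity
  have h2e : (1 : ℝ) - e ≠ 0 := by
    intro h
    have : e = 1 := by linarith
    rw [this] at he; norm_num at he
  -- Binet formulas
  have binet : ∀ k : ℤ,
      ((Q k : ℝ) = (1+e)^k + (1-e)^k ∧ 2*e*(P k : ℝ) = (1+e)^k - (1-e)^k) ∧
      ((Q (k+1) : ℝ) = (1+e)^(k+1) + (1-e)^(k+1) ∧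
        2*e*(P (k+1) : ℝ) = (1+e)^(k+1) - (1-e)^(k+1)) := by
    intro k
    induction k using Int.induction_on with
    | zero =>
      refine ⟨⟨?_, ?_⟩, ?_, ?_⟩ <;> (norm_num [hQ0, hP0, hQ1, hP1]; try ring)
    | succ k ih =>
      obtain ⟨⟨hq0, hp0⟩, hq1, hp1⟩ := ih
      refine ⟨⟨hq1, hp1⟩, ?_, ?_⟩
      · have hr := hQ (k : ℤ)
        rw [show (k:ℤ)+2 = (k:ℤ)+1+1 by ring] at hr
        have hrr : (Q ((k:ℤ)+1+1) : ℝ) = 2*(Q ((k:ℤ)+1) : ℝ) + (Q (k:ℤ) : ℝ) := by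
          exact_mod_cast hr
        simp only [zpow_add_one₀ h1e, zpow_add_one₀ h2e] at hq1 ⊢
        linear_combination hrr + 2*hq1 + hq0 - ((1+e)^(k:ℤ) + (1-e)^(k:ℤ))*he
      · have hr := hP (k : ℤ)
        rw [show (k:ℤ)+2 = (k:ℤ)+1+1 by ring] at hr
        have hrr : (P ((k:ℤ)+1+1) : ℝ) = 2*(P ((k:ℤ)+1) : ℝ) + (P (k:ℤ) : ℝ) := by
          exact_mod_cast hr
        simp only [zpow_add_one₀ h1e, zpow_add_one₀ h2e] at hp1 ⊢
        linear_combination 2*e*hrr + 2*hp1 + hp0 - ((1+e)^(k:ℤ) - (1-e)^(k:ℤ))*he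
    | pred k ih =>
      obtain ⟨⟨hq0, hp0⟩, hq1, hp1⟩ := ih
      have hinv1 : ((1:ℝ)+e)⁻¹ = -(1-e) := by
        refine inv_eq_of_mul_eq_one_right ?_
        linear_combination he
      have hinv2 : ((1:ℝ)-e)⁻¹ = -(1+e) := by
        refine inv_eq_of_mul_eq_one_right ?_
        linear_combination he
      have hfix : -(k:ℤ) - 1 + 1 = -(k:ℤ) := by ring
      refine ⟨⟨?_, ?_⟩, ?_, ?_⟩
      · have hr := hQ (-(k:ℤ)-1)
        rw [show -(k:ℤ)-1+2 = -(k:ℤ)+1 by ring, show -(k:ℤ)-1+1 = -(k:ℤ) by ring] at hr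
        have hrr : (Q (-(k:ℤ)+1) : ℝ) = 2*(Q (-(k:ℤ)) : ℝ) + (Q (-(k:ℤ)-1) : ℝ) := by
          exact_mod_cast hr
        simp only [zpow_add_one₀ h1e, zpow_add_one₀ h2e] at hq1
        rw [zpow_sub_one₀ h1e, zpow_sub_one₀ h2e, hinv1, hinv2]
        linear_combination -hrr + hq1 - 2*hq0
      · have hr := hP (-(k:ℤ)-1)
        rw [show -(k:ℤ)-1+2 = -(k:ℤ)+1 by ring, show -(k:ℤ)-1+1 = -(k:ℤ) by ring] at hr
        have hrr : (P (-(k:ℤ)+1) : ℝ) = 2*(P (-(k:ℤ)) : ℝ) + (P (-(k:ℤ)-1) : ℝ) := by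
          exact_mod_cast hr
        simp only [zpow_add_one₀ h1e, zpow_add_one₀ h2e] at hp1
        rw [zpow_sub_one₀ h1e, zpow_sub_one₀ h2e, hinv1, hinv2]
        linear_combination (-2*e)*hrr + hp1 - 2*hp0
      · rw [hfix]; exact hq0
      · rw [hfix]; exact hp0
  have hQb : ∀ k : ℤ, (Q k : ℝ) = (1+e)^k + (1-e)^k := fun k => (binet k).1.1
  have hPb : ∀ k : ℤ, 2*e*(P k : ℝ) = (1+e)^k - (1-e)^k := fun k => (binet k).1.2
  have hab : ((1:ℝ)+e)*(1-e) = -1 := by linear_combination -he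
  have hsign : (-1:ℝ)^(m+1) = -((1+e)^m * (1-e)^m) := by
    rw [← hab, mul_zpow, zpow_add_one₀ h1e, zpow_add_one₀ h2e]
    linear_combination ((1+e)^m*(1-e)^m) * hab
  have h8 : 8*(P r : ℝ)^2 = ((1+e)^r - (1-e)^r)^2 := by
    linear_combination (2*e*(P r : ℝ) + ((1+e)^r - (1-e)^r)) * hPb r - 4*(P r : ℝ)^2*he
  have h0 : (Q (m+r) : ℝ)*(Q (m+r) : ℝ) - (Q (m+r+1) : ℝ)*(Q (m+r+1) : ℝ)
      - (Q (m+r+2) : ℝ)*(Q (m+r+2) : ℝ) + (Q (m+r+3) : ℝ)*(Q (m+r+3) : ℝ)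
      - ((Q (m+r+r) : ℝ)*(Q m : ℝ) - (Q (m+r+r+1) : ℝ)*(Q (m+1) : ℝ)
        - (Q (m+r+r+2) : ℝ)*(Q (m+2) : ℝ) + (Q (m+r+r+3) : ℝ)*(Q (m+3) : ℝ)) = 0 := by
    simp only [hQb, show (3:ℤ) = 1+1+1 by norm_num, show (2:ℤ) = 1+1 by norm_num,
      zpow_add₀ h1e, zpow_add₀ h2e, zpow_one]
    linear_combination ((1+e)^m*(1-e)^m*((1+e)^r - (1-e)^r)^2*e^4) * he
  have h1 : 2*(Q (m+r) : ℝ)*(Q (m+r+1) : ℝ) - 2*(Q (m+r+2) : ℝ)*(Q (m+r+3) : ℝ)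
      - ((Q (m+r+r) : ℝ)*(Q (m+1) : ℝ) + (Q (m+r+r+1) : ℝ)*(Q m : ℝ)
        - (Q (m+r+r+2) : ℝ)*(Q (m+3) : ℝ) - (Q (m+r+r+3) : ℝ)*(Q (m+2) : ℝ)) = 0 := by
    simp only [hQb, show (3:ℤ) = 1+1+1 by norm_num, show (2:ℤ) = 1+1 by norm_num,
      zpow_add₀ h1e, zpow_add₀ h2e, zpow_one]
    linear_combination (2*(1+e)^m*(1-e)^m*((1+e)^r - (1-e)^r)^2*e^2) * he
  have h2 : 2*(Q (m+r) : ℝ)*(Q (m+r+2) : ℝ) - 2*(Q (m+r+1) : ℝ)*(Q (m+r+3) : ℝ)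
      - ((Q (m+r+r) : ℝ)*(Q (m+2) : ℝ) + (Q (m+r+r+2) : ℝ)*(Q m : ℝ)
        - (Q (m+r+r+1) : ℝ)*(Q (m+3) : ℝ) - (Q (m+r+r+3) : ℝ)*(Q (m+1) : ℝ))
      = 96*(-1:ℝ)^(m+1)*(P r : ℝ)^2 := by
    rw [hsign]
    simp only [hQb, show (3:ℤ) = 1+1+1 by norm_num, show (2:ℤ) = 1+1 by norm_num,
      zpow_add₀ h1e, zpow_add₀ h2e, zpow_one]
    linear_combination (12*(1+e)^m*(1-e)^m) * h8
      - ((1+e)^m*(1-e)^m*((1+e)^r - (1-e)^r)^2*(6+2*e^2)) * he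
  have h3 : 2*(Q (m+r) : ℝ)*(Q (m+r+3) : ℝ) + 2*(Q (m+r+1) : ℝ)*(Q (m+r+2) : ℝ)
      - ((Q (m+r+r) : ℝ)*(Q (m+3) : ℝ) + (Q (m+r+r+1) : ℝ)*(Q (m+2) : ℝ)
        + (Q (m+r+r+2) : ℝ)*(Q (m+1) : ℝ) + (Q (m+r+r+3) : ℝ)*(Q m : ℝ))
      = 96*(-1:ℝ)^(m+1)*(P r : ℝ)^2 := by
    rw [hsign]
    simp only [hQb, show (3:ℤ) = 1+1+1 by norm_num, show (2:ℤ) = 1+1 by norm_num,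
      zpow_add₀ h1e, zpow_add₀ h2e, zpow_one]
    linear_combination (12*(1+e)^m*(1-e)^m) * h8
      - (4*(1+e)^m*(1-e)^m*((1+e)^r - (1-e)^r)^2) * he
  match_scalars
  · linear_combination h0
  · linear_combination h1
  · linear_combination h2
  · linear_combination h3
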